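/- Intermediate curvature computation: with E = (1−y)/(x(1−x)(2−x−y)) and G = (1−x)/(y(1−y)(2−x−y)) on (0,1)², one has √(EG) = 1/(√(xy)(2−x−y)), E_y = −1/(x(2−x−y)²), G_x = −1/(y(2−x−y)²), and ∂_y(E_y/√(EG)) + ∂_x(G_x/√(EG)) = −2/(√(xy)(2−x−y)²). -/

import Mathlib

/-- The coefficient E of the variance metric. -/
noncomputable def Emetric (x y : ℝ) : ℝ := (1 - y) / (x * (1 - x) * (2 - x - y))

/-- The coefficient G of the variance metric. -/
noncomputable def Gmetric (x y : ℝ) : ℝ := (1 - x) / (y * (1 - y) * (2 - x - y))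

lemma Ederiv (x y : ℝ) (hx : 0 < x) (hx1 : x < 1) (hne : 2 - x - y ≠ 0) :
    HasDerivAt (fun t => Emetric x t) (-1 / (x * (2 - x - y) ^ 2)) y := by
  have h1 : HasDerivAt (fun t : ℝ => 1 - t) (-1) y := by
    simpa using (hasDerivAt_id y).const_sub 1
  have h2 : HasDerivAt (fun t : ℝ => x * (1 - x) * (2 - x - t)) (x * (1 - x) * (-1)) y := by
    have : HasDerivAt (fun t : ℝ => 2 - x - t) (-1) y := by
      simpa using (hasDerivAt_id y).const_sub (2 - x)
    simpa using this.const_mul (x * (1 - x))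
  have hd0 : x * (1 - x) * (2 - x - y) ≠ 0 :=
    mul_ne_zero (mul_ne_zero hx.ne' (by linarith)) hne
  have := h1.fun_div h2 hd0
  refine this.congr_deriv ?_
  have h1x : (1 : ℝ) - x ≠ 0 := by linarith
  field_simp
  ring

lemma Gderiv (x y : ℝ) (hy : 0 < y) (hy1 : y < 1) (hne : 2 - x - y ≠ 0) :
    HasDerivAt (fun t => Gmetric t y) (-1 / (y * (2 - x - y) ^ 2)) x := by
  have h1 : HasDerivAt (fun t : ℝ => 1 - t) (-1) x := by
    simpa using (hasDerivAt_id x).const_sub 1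
  have h2 : HasDerivAt (fun t : ℝ => y * (1 - y) * (2 - t - y)) (y * (1 - y) * (-1)) x := by
    have h : HasDerivAt (fun t : ℝ => 2 - t - y) (-1) x := by
      have h0 : HasDerivAt (fun t : ℝ => (2 - y) - t) (-1) x := by
        simpa using (hasDerivAt_id x).const_sub (2 - y)
      have : (fun t : ℝ => (2 - y) - t) = fun t : ℝ => 2 - t - y := by
        funext t; ring
      rwa [this] at h0
    simpa using h.const_mul (y * (1 - y))
  have hd0 : y * (1 - y) * (2 - x - y) ≠ 0 :=
    mul_ne_zero (mul_ne_zero hy.ne' (by linarith)) hne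
  have h := h1.fun_div h2 hd0
  have heq : (fun t : ℝ => (1 - t) / (y * (1 - y) * (2 - t - y))) = fun t => Gmetric t y := by
    funext t; rfl
  rw [heq] at h
  refine h.congr_deriv ?_
  have h1y : (1 : ℝ) - y ≠ 0 := by linarith
  field_simp
  ring

lemma EGval (x y : ℝ) (hx : 0 < x) (hx1 : x < 1) (hy : 0 < y) (hy1 : y < 1)
    (hne : 2 - x - y ≠ 0) :
    Emetric x y * Gmetric x y = 1 / (x * y * (2 - x - y) ^ 2) := by
  unfold Emetric Gmetric
  have h1 : (1 : ℝ) - x ≠ 0 := by linarith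
  have h2 : (1 : ℝ) - y ≠ 0 := by linarith
  field_simp

lemma sqrtEG (x y : ℝ) (hx : 0 < x) (hx1 : x < 1) (hy : 0 < y) (hy1 : y < 1)
    (hpos : 0 < 2 - x - y) :
    Real.sqrt (Emetric x y * Gmetric x y) = 1 / (Real.sqrt (x * y) * (2 - x - y)) := by
  rw [EGval x y hx hx1 hy hy1 hpos.ne', one_div, Real.sqrt_inv,
    Real.sqrt_mul (by positivity), Real.sqrt_sq hpos.le, one_div]

lemma q1 (a b x y : ℝ) (ha : 0 < a) (hb : 0 < b) (hax : a ^ 2 = x) (hby : b ^ 2 = y)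
    (hpos : 0 < 2 - x - y) :
    -1 / (x * (2 - x - y) ^ 2) / (1 / (a * b * (2 - x - y))) = -b / (a * (2 - x - y)) := by
  subst hax hby
  have hc : 2 - a ^ 2 - b ^ 2 ≠ 0 := hpos.ne'
  field_simp

lemma q2 (a b x y : ℝ) (ha : 0 < a) (hb : 0 < b) (hax : a ^ 2 = x) (hby : b ^ 2 = y)
    (hpos : 0 < 2 - x - y) :
    -1 / (y * (2 - x - y) ^ 2) / (1 / (a * b * (2 - x - y))) = -a / (b * (2 - x - y)) := by
  subst hax hby
  have hc : 2 - a ^ 2 - b ^ 2 ≠ 0 := hpos.ne'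
  field_simp

lemma qsum (a b x y : ℝ) (ha : 0 < a) (hb : 0 < b) (hax : a ^ 2 = x) (hby : b ^ 2 = y)
    (hpos : 0 < 2 - x - y) :
    (-(1 / (2 * b)) * (a * (2 - x - y)) - -b * -a) / (a * (2 - x - y)) ^ 2
      + (-(1 / (2 * a)) * (b * (2 - x - y)) - -a * -b) / (b * (2 - x - y)) ^ 2
      = -2 / (a * b * (2 - x - y) ^ 2) := by
  subst hax hby
  have hc : 2 - a ^ 2 - b ^ 2 ≠ 0 := hpos.ne'
  field_simp
  ring

/-- intermediate curvature computations: √(EG) = 1/(√(xy)(2-x-y)),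
E_y = -1/(x(2-x-y)²), G_x = -1/(y(2-x-y)²), and
(E_y/√(EG))_y + (G_x/√(EG))_x = -2/(√(xy)(2-x-y)²). -/
theorem curvature_intermediate_steps
    (x y : ℝ) (hx : x ∈ Set.Ioo (0 : ℝ) 1) (hy : y ∈ Set.Ioo (0 : ℝ) 1) :
    Real.sqrt (Emetric x y * Gmetric x y) = 1 / (Real.sqrt (x * y) * (2 - x - y)) ∧
    deriv (fun t => Emetric x t) y = -1 / (x * (2 - x - y) ^ 2) ∧
    deriv (fun t => Gmetric t y) x = -1 / (y * (2 - x - y) ^ 2) ∧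
    deriv (fun y' => deriv (fun t => Emetric x t) y'
        / Real.sqrt (Emetric x y' * Gmetric x y')) y
      + deriv (fun x' => deriv (fun t => Gmetric t y) x'
        / Real.sqrt (Emetric x' y * Gmetric x' y)) x
      = -2 / (Real.sqrt (x * y) * (2 - x - y) ^ 2) := by
  obtain ⟨hx0, hx1⟩ := hx
  obtain ⟨hy0, hy1⟩ := hy
  have hpos : (0:ℝ) < 2 - x - y := by linarith
  have sa : 0 < Real.sqrt x := Real.sqrt_pos.2 hx0
  have sb : 0 < Real.sqrt y := Real.sqrt_pos.2 hy0
  have sax : Real.sqrt x ^ 2 = x := Real.sq_sqrt hx0.le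
  have sby : Real.sqrt y ^ 2 = y := Real.sq_sqrt hy0.le
  refine ⟨sqrtEG x y hx0 hx1 hy0 hy1 hpos,
    (Ederiv x y hx0 hx1 hpos.ne').deriv,
    (Gderiv x y hy0 hy1 hpos.ne').deriv, ?_⟩
  have key1 : ∀ y' ∈ Set.Ioo (0:ℝ) 1,
      deriv (fun t => Emetric x t) y' / Real.sqrt (Emetric x y' * Gmetric x y')
      = -Real.sqrt y' / (Real.sqrt x * (2 - x - y')) := by
    intro y' ⟨h0, h1⟩
    have hp : (0:ℝ) < 2 - x - y' := by linarith
    rw [(Ederiv x y' hx0 hx1 hp.ne').deriv, sqrtEG x y' hx0 hx1 h0 h1 hp,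
      Real.sqrt_mul hx0.le]
    exact q1 (Real.sqrt x) (Real.sqrt y') x y' sa (Real.sqrt_pos.2 h0) sax
      (Real.sq_sqrt h0.le) hp
  have key2 : ∀ x' ∈ Set.Ioo (0:ℝ) 1,
      deriv (fun t => Gmetric t y) x' / Real.sqrt (Emetric x' y * Gmetric x' y)
      = -Real.sqrt x' / (Real.sqrt y * (2 - x' - y)) := by
    intro x' ⟨h0, h1⟩
    have hp : (0:ℝ) < 2 - x' - y := by linarith
    rw [(Gderiv x' y hy0 hy1 hp.ne').deriv, sqrtEG x' y h0 h1 hy0 hy1 hp,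
      Real.sqrt_mul h0.le]
    exact q2 (Real.sqrt x') (Real.sqrt y) x' y (Real.sqrt_pos.2 h0) sb
      (Real.sq_sqrt h0.le) sby hp
  have ev1 : (fun y' => deriv (fun t => Emetric x t) y'
      / Real.sqrt (Emetric x y' * Gmetric x y'))
      =ᶠ[nhds y] (fun y' => -Real.sqrt y' / (Real.sqrt x * (2 - x - y'))) :=
    Filter.eventually_of_mem (isOpen_Ioo.mem_nhds ⟨hy0, hy1⟩) key1
  have ev2 : (fun x' => deriv (fun t => Gmetric t y) x'
      / Real.sqrt (Emetric x' y * Gmetric x' y))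
      =ᶠ[nhds x] (fun x' => -Real.sqrt x' / (Real.sqrt y * (2 - x' - y))) :=
    Filter.eventually_of_mem (isOpen_Ioo.mem_nhds ⟨hx0, hx1⟩) key2
  have d1 : HasDerivAt (fun y' => -Real.sqrt y' / (Real.sqrt x * (2 - x - y')))
      ((-(1 / (2 * Real.sqrt y)) * (Real.sqrt x * (2 - x - y))
        - -Real.sqrt y * -Real.sqrt x) / (Real.sqrt x * (2 - x - y)) ^ 2) y := by
    have hn : HasDerivAt (fun y' : ℝ => -Real.sqrt y') (-(1 / (2 * Real.sqrt y))) y :=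
      (Real.hasDerivAt_sqrt hy0.ne').neg
    have hd : HasDerivAt (fun y' : ℝ => Real.sqrt x * (2 - x - y')) (-Real.sqrt x) y := by
      have : HasDerivAt (fun y' : ℝ => 2 - x - y') (-1) y := by
        simpa using (hasDerivAt_id y).const_sub (2 - x)
      simpa using this.const_mul (Real.sqrt x)
    have hd0 : Real.sqrt x * (2 - x - y) ≠ 0 := by positivity
    simpa using hn.fun_div hd hd0
  have d2 : HasDerivAt (fun x' => -Real.sqrt x' / (Real.sqrt y * (2 - x' - y)))
      ((-(1 / (2 * Real.sqrt x)) * (Real.sqrt y * (2 - x - y))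
        - -Real.sqrt x * -Real.sqrt y) / (Real.sqrt y * (2 - x - y)) ^ 2) x := by
    have hn : HasDerivAt (fun x' : ℝ => -Real.sqrt x') (-(1 / (2 * Real.sqrt x))) x :=
      (Real.hasDerivAt_sqrt hx0.ne').neg
    have hd : HasDerivAt (fun x' : ℝ => Real.sqrt y * (2 - x' - y)) (-Real.sqrt y) x := by
      have h : HasDerivAt (fun x' : ℝ => 2 - x' - y) (-1) x := by
        have h0 : HasDerivAt (fun x' : ℝ => (2 - y) - x') (-1) x := by
          simpa using (hasDerivAt_id x).const_sub (2 - y)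
        have : (fun x' : ℝ => (2 - y) - x') = fun x' : ℝ => 2 - x' - y := by
          funext t; ring
        rwa [this] at h0
      simpa using h.const_mul (Real.sqrt y)
    have hd0 : Real.sqrt y * (2 - x - y) ≠ 0 := by positivity
    simpa using hn.fun_div hd hd0
  rw [ev1.deriv_eq, ev2.deriv_eq, d1.deriv, d2.deriv, Real.sqrt_mul hx0.le]
  exact qsum (Real.sqrt x) (Real.sqrt y) x y sa sb sax sby hpos
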